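/- arXiv:1908.08487 — 2 statements merged into one kernel-verified Lean document; each statement's English description precedes it below -/
import Mathlib

section
/- Let f ≥ 0 be a measurable function on ℝ^d, let μ > 0, 0 < δ₁ < 1, and B ≥ 1. Suppose {S_j}_{j∈ℕ} is a countable family of measurable sets of finite positive Lebesgue measure such that (i) ∫_{S_j} f = μ(1−δ₁)|S_j| for every j, (ii) {x : f(x) ≥ μ} ⊆ ⋃_j S_j, and (iii) Σ_j 1_{S_j}(x) ≤ B for every x. Then |⋃_j S_j| ≥ |{f ≥ μ}| + |{f ≥ 2μ}|/B. -/
open MeasureTheory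
open scoped ENNReal

theorem covering_measure_estimate
    (d : ℕ)
    (f : EuclideanSpace ℝ (Fin d) → ℝ) (hfmeas : Measurable f) (hf0 : ∀ x, 0 ≤ f x)
    (μ : ℝ) (hμ : 0 < μ)
    (δ₁ : ℝ) (hδ₁ : 0 < δ₁) (hδ₁' : δ₁ < 1)
    (B : ℝ) (hB : 1 ≤ B)
    (S : ℕ → Set (EuclideanSpace ℝ (Fin d)))
    (hSmeas : ∀ j, MeasurableSet (S j))
    (hSpos : ∀ j, 0 < volume (S j))
    (hSfin : ∀ j, volume (S j) < ∞)
    (havg : ∀ j, (∫ x in S j, f x) = μ * (1 - δ₁) * (volume (S j)).toReal)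
    (hcover : {x | μ ≤ f x} ⊆ ⋃ j, S j)
    (hbound : ∀ x, (∑' j, Set.indicator (S j) (fun _ => (1 : ℝ≥0∞)) x) ≤ ENNReal.ofReal B) :
    volume {x | μ ≤ f x} + volume {x | 2 * μ ≤ f x} / ENNReal.ofReal B ≤
      volume (⋃ j, S j) := by
  set E1 : Set (EuclideanSpace ℝ (Fin d)) := {x | μ ≤ f x} with hE1
  set E2 : Set (EuclideanSpace ℝ (Fin d)) := {x | 2 * μ ≤ f x} with hE2
  set U : Set (EuclideanSpace ℝ (Fin d)) := ⋃ j, S j with hU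
  have mE1 : MeasurableSet E1 := measurableSet_le measurable_const hfmeas
  have mE2 : MeasurableSet E2 := measurableSet_le measurable_const hfmeas
  have hE21 : E2 ⊆ E1 := by
    intro x hx
    have : μ ≤ 2 * μ := by linarith
    exact le_trans this hx
  -- key per-j inequality
  have key : ∀ j, volume (S j ∩ E2) ≤ volume (S j \ E1) := by
    intro j
    have hSf : volume (S j) ≠ ∞ := (hSfin j).ne
    have hint : IntegrableOn f (S j) volume := by
      by_contra h
      have h0 : (∫ x in S j, f x) = 0 := integral_undef h
      rw [havg j] at h0
      have hv : 0 < (volume (S j)).toReal := ENNReal.toReal_pos (hSpos j).ne' hSf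
      have h1 : (0:ℝ) < μ * (1 - δ₁) := mul_pos hμ (by linarith)
      nlinarith
    have fin2 : volume (S j ∩ E2) ≠ ∞ :=
      (lt_of_le_of_lt (measure_mono Set.inter_subset_left) (hSfin j)).ne
    have fin12 : volume (S j ∩ (E1 \ E2)) ≠ ∞ :=
      (lt_of_le_of_lt (measure_mono Set.inter_subset_left) (hSfin j)).ne
    have fin1 : volume (S j ∩ E1) ≠ ∞ :=
      (lt_of_le_of_lt (measure_mono Set.inter_subset_left) (hSfin j)).ne
    have find : volume (S j \ E1) ≠ ∞ :=
      (lt_of_le_of_lt (measure_mono Set.diff_subset) (hSfin j)).ne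
    set v2 := (volume (S j ∩ E2)).toReal with hv2
    set v12 := (volume (S j ∩ (E1 \ E2))).toReal with hv12
    set vd := (volume (S j \ E1)).toReal with hvd
    -- integral lower bounds
    have hi2 : (2 * μ) * v2 ≤ ∫ x in S j ∩ E2, f x := by
      apply setIntegral_ge_of_const_le_real ((hSmeas j).inter mE2) fin2
      · intro x hx; exact hx.2
      · exact hint.mono_set Set.inter_subset_left
    have hi12 : μ * v12 ≤ ∫ x in S j ∩ (E1 \ E2), f x := by
      apply setIntegral_ge_of_const_le_real ((hSmeas j).inter (mE1.diff mE2)) fin12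
      · intro x hx; exact hx.2.1
      · exact hint.mono_set Set.inter_subset_left
    -- split S j ∩ E1
    have hsplit : S j ∩ E1 = (S j ∩ E2) ∪ (S j ∩ (E1 \ E2)) := by
      ext x
      constructor
      · rintro ⟨hs, h1⟩
        by_cases h2 : x ∈ E2
        · exact Or.inl ⟨hs, h2⟩
        · exact Or.inr ⟨hs, h1, h2⟩
      · rintro (⟨hs, h2⟩ | ⟨hs, h1, _⟩)
        · exact ⟨hs, hE21 h2⟩
        · exact ⟨hs, h1⟩
    have hdisj : Disjoint (S j ∩ E2) (S j ∩ (E1 \ E2)) := by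
      apply Set.disjoint_left.mpr
      rintro x ⟨_, h2⟩ ⟨_, _, h2'⟩
      exact h2' h2
    have hintsum : (∫ x in S j ∩ E1, f x) =
        (∫ x in S j ∩ E2, f x) + ∫ x in S j ∩ (E1 \ E2), f x := by
      rw [hsplit]
      exact setIntegral_union hdisj ((hSmeas j).inter (mE1.diff mE2))
        (hint.mono_set Set.inter_subset_left) (hint.mono_set Set.inter_subset_left)
    have hmono : (∫ x in S j ∩ E1, f x) ≤ ∫ x in S j, f x := by
      apply setIntegral_mono_set hint
      · exact Filter.Eventually.of_forall hf0
      · exact HasSubset.Subset.eventuallyLE Set.inter_subset_left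
    -- measure decompositions
    have hmsum : volume (S j ∩ E1) = volume (S j ∩ E2) + volume (S j ∩ (E1 \ E2)) := by
      rw [hsplit]
      exact measure_union hdisj ((hSmeas j).inter (mE1.diff mE2))
    have hmsum' : (volume (S j ∩ E1)).toReal = v2 + v12 := by
      rw [hmsum, ENNReal.toReal_add fin2 fin12]
    have hStot : (volume (S j)).toReal = (v2 + v12) + vd := by
      rw [← hmsum']
      rw [← ENNReal.toReal_add fin1 find, measure_inter_add_diff (S j) mE1]
    -- combine
    have hμS : (∫ x in S j, f x) ≤ μ * (volume (S j)).toReal := by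
      rw [havg j]
      have hv : 0 ≤ (volume (S j)).toReal := ENNReal.toReal_nonneg
      have h1 : μ * (1 - δ₁) ≤ μ := by nlinarith
      exact mul_le_mul_of_nonneg_right h1 hv
    have hreal : v2 ≤ vd := by
      have h1 : (2 * μ) * v2 + μ * v12 ≤ μ * ((v2 + v12) + vd) := by
        calc (2 * μ) * v2 + μ * v12 ≤ ∫ x in S j ∩ E1, f x := by
              rw [hintsum]; exact add_le_add hi2 hi12
          _ ≤ ∫ x in S j, f x := hmono
          _ ≤ μ * (volume (S j)).toReal := hμS
          _ = μ * ((v2 + v12) + vd) := by rw [hStot]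
      nlinarith
    exact (ENNReal.toReal_le_toReal fin2 find).mp hreal
  -- sum up
  have hsum : volume E2 ≤ ∑' j, volume (S j \ E1) := by
    have hcov2 : E2 ⊆ ⋃ j, (S j ∩ E2) := by
      intro x hx
      obtain ⟨t, ⟨j, rfl⟩, hxt⟩ := hcover (hE21 hx)
      exact Set.mem_iUnion.mpr ⟨j, hxt, hx⟩
    calc volume E2 ≤ volume (⋃ j, S j ∩ E2) := measure_mono hcov2
      _ ≤ ∑' j, volume (S j ∩ E2) := measure_iUnion_le _
      _ ≤ ∑' j, volume (S j \ E1) := ENNReal.tsum_le_tsum key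
  have hsum2 : (∑' j, volume (S j \ E1)) ≤ ENNReal.ofReal B * volume (U \ E1) := by
    have h1 : (∑' j, volume (S j \ E1)) =
        ∫⁻ x, ∑' j, Set.indicator (S j \ E1) (fun _ => (1 : ℝ≥0∞)) x := by
      calc (∑' j, volume (S j \ E1))
          = ∑' j, ∫⁻ x, Set.indicator (S j \ E1) (fun _ => (1 : ℝ≥0∞)) x := by
            congr 1
            funext j
            rw [lintegral_indicator_const ((hSmeas j).diff mE1), one_mul]
        _ = ∫⁻ x, ∑' j, Set.indicator (S j \ E1) (fun _ => (1 : ℝ≥0∞)) x :=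
            (lintegral_tsum (fun j => (measurable_one.indicator
              ((hSmeas j).diff mE1)).aemeasurable)).symm
    rw [h1]
    have h2 : ∀ x, (∑' j, Set.indicator (S j \ E1) (fun _ => (1 : ℝ≥0∞)) x) ≤
        Set.indicator (U \ E1) (fun _ => ENNReal.ofReal B) x := by
      intro x
      by_cases hx : x ∈ U \ E1
      · rw [Set.indicator_of_mem hx]
        refine le_trans (ENNReal.tsum_le_tsum fun j => ?_) (hbound x)
        exact Set.indicator_le_indicator_of_subset Set.diff_subset (fun _ => zero_le) x
      · rw [Set.indicator_of_notMem hx]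
        have : ∀ j, Set.indicator (S j \ E1) (fun _ => (1 : ℝ≥0∞)) x = 0 := by
          intro j
          apply Set.indicator_of_notMem
          intro ⟨hxs, hxe⟩
          exact hx ⟨Set.mem_iUnion.mpr ⟨j, hxs⟩, hxe⟩
        simp [this]
    calc (∫⁻ x, ∑' j, Set.indicator (S j \ E1) (fun _ => (1 : ℝ≥0∞)) x)
        ≤ ∫⁻ x, Set.indicator (U \ E1) (fun _ => ENNReal.ofReal B) x :=
          lintegral_mono h2
      _ = ENNReal.ofReal B * volume (U \ E1) := by
          rw [lintegral_indicator_const]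
          exact (MeasurableSet.iUnion hSmeas).diff mE1
  have hdiv : volume E2 / ENNReal.ofReal B ≤ volume (U \ E1) :=
    ENNReal.div_le_of_le_mul' (hsum.trans hsum2)
  have hE1U : volume E1 = volume (U ∩ E1) := by
    rw [Set.inter_eq_right.mpr hcover]
  calc volume E1 + volume E2 / ENNReal.ofReal B
      ≤ volume (U ∩ E1) + volume (U \ E1) := by
        rw [← hE1U]; exact add_le_add le_rfl hdiv
    _ = volume U := measure_inter_add_diff U mE1
end

section
/- Let K ⊂ ℝ^d be a centrally symmetric convex body. The sequence M^n 1_{B(0,1)} is pointwise nondecreasing in n and bounded by 1, and its pointwise limit g = lim_{n→∞} M^n 1_{B(0,1)} satisfies Mg(x) = g(x) for every x ∈ ℝ^d; i.e. the limit is a fixed point of M. -/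
open MeasureTheory Metric Filter

/-- The centered maximal function on `ℝ^d` associated to a centrally symmetric
convex body `K`. -/
noncomputable def centeredMax {d : ℕ} (K : Set (EuclideanSpace ℝ (Fin d)))
    (f : EuclideanSpace ℝ (Fin d) → ℝ) (x : EuclideanSpace ℝ (Fin d)) : ℝ :=
  ⨆ l : {l : ℝ // 0 < l}, ⨍ y in (fun z => x + (l : ℝ) • z) '' K, |f y|

section AuxCM
open MeasureTheory Metric Filter Pointwise Topology

variable {d : ℕ}

section Avg
variable {S : Set (EuclideanSpace ℝ (Fin d))}

lemma avg_nonneg (f : EuclideanSpace ℝ (Fin d) → ℝ) : 0 ≤ ⨍ y in S, |f y| := by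
  rw [setAverage_eq]
  exact smul_nonneg (by positivity) (integral_nonneg fun y => abs_nonneg _)

lemma integrableOn_of_bdd {f : EuclideanSpace ℝ (Fin d) → ℝ} (ht : volume S ≠ ⊤)
    (hf : AEStronglyMeasurable f (volume : Measure (EuclideanSpace ℝ (Fin d))))
    (hb : ∀ y, |f y| ≤ 1) : IntegrableOn f S := by
  apply Measure.integrableOn_of_bounded ht hf
  exact Eventually.of_forall fun y => by simpa [Real.norm_eq_abs] using hb y

lemma avg_le_one {f : EuclideanSpace ℝ (Fin d) → ℝ} (h0 : volume S ≠ 0) (ht : volume S ≠ ⊤)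
    (hb : ∀ y, |f y| ≤ 1) : ⨍ y in S, |f y| ≤ 1 := by
  rw [setAverage_eq]
  have h1 : ∫ y in S, |f y| ∂volume ≤ ∫ _ in S, (1:ℝ) ∂volume := by
    apply integral_mono_of_nonneg (Eventually.of_forall fun y => abs_nonneg _)
      (integrableOn_const (C := (1:ℝ)) ht) (Eventually.of_forall hb)
  calc (volume S).toReal⁻¹ • ∫ y in S, |f y| ≤ (volume S).toReal⁻¹ • ∫ _ in S, (1:ℝ) :=
        smul_le_smul_of_nonneg_left h1 (by positivity)
    _ = 1 := by
        rw [setIntegral_const, smul_eq_mul, smul_eq_mul, mul_one, measureReal_def,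
          inv_mul_cancel₀ (by simp [ENNReal.toReal_ne_zero, h0, ht])]

lemma avg_mono {f h : EuclideanSpace ℝ (Fin d) → ℝ} (hfh : ∀ y, |f y| ≤ |h y|) (hi : IntegrableOn h S) :
    ⨍ y in S, |f y| ≤ ⨍ y in S, |h y| := by
  rw [setAverage_eq, setAverage_eq]
  refine smul_le_smul_of_nonneg_left ?_ (by positivity)
  exact integral_mono_of_nonneg (Eventually.of_forall fun y => abs_nonneg _)
    hi.abs (Eventually.of_forall hfh)

lemma avg_one {f : EuclideanSpace ℝ (Fin d) → ℝ} (hS : MeasurableSet S) (h0 : volume S ≠ 0) (ht : volume S ≠ ⊤)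
    (hf : ∀ y ∈ S, f y = 1) : ⨍ y in S, |f y| = 1 := by
  have : ⨍ y in S, |f y| = ⨍ _ in S, (1:ℝ) := by
    apply setAverage_congr_fun hS (Eventually.of_forall ?_)
    intro y hy; simp [hf y hy]
  rw [this, setAverage_const h0 ht]
end Avg

section C2
variable {K : Set (EuclideanSpace ℝ (Fin d))}

local notation "E" => EuclideanSpace ℝ (Fin d)

lemma vol_image (x : E) (l : ℝ) (K : Set E) (hl : 0 ≤ l) :
    volume ((fun z => x + l • z) '' K) = ENNReal.ofReal (l ^ d) * volume K := by
  have : (fun z : E => x + l • z) '' K = x +ᵥ (l • K) := by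
    rw [← Set.image_vadd, ← Set.image_smul, Set.image_image]
    rfl
  rw [this, measure_vadd, Measure.addHaar_smul_of_nonneg volume hl,
    finrank_euclideanSpace_fin]


lemma exists_ball_subset (hKconv : Convex ℝ K) (hKint : (interior K).Nonempty)
    (hKsymm : K = -K) : ∃ r > 0, ball (0 : EuclideanSpace ℝ (Fin d)) r ⊆ K := by
  obtain ⟨z, hz⟩ := hKint
  obtain ⟨r, hr, hball⟩ := Metric.isOpen_iff.1 isOpen_interior z hz
  refine ⟨r, hr, fun w hw => ?_⟩
  have hw' : ‖w‖ < r := by simpa [mem_ball, dist_eq_norm] using hw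
  have h1 : z + w ∈ K := interior_subset <| hball <| by
    simp [mem_ball, dist_eq_norm, hw']
  have h2 : z - w ∈ K := interior_subset <| hball <| by
    simp [mem_ball, dist_eq_norm, norm_sub_rev, hw']
  have h3 : -z + w ∈ K := by
    rw [hKsymm]
    rw [Set.mem_neg]
    convert h2 using 1
    module
  have := hKconv h1 h3 (by norm_num : (0:ℝ) ≤ 1/2) (by norm_num : (0:ℝ) ≤ 1/2) (by norm_num)
  have heq : (1/2 : ℝ) • (z + w) + (1/2 : ℝ) • (-z + w) = w := by module
  rwa [heq] at this

lemma subset_scaled (hKconv : Convex ℝ K) {r : ℝ} (hr : 0 < r)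
    (hball : ball (0 : EuclideanSpace ℝ (Fin d)) r ⊆ K)
    {x x' : EuclideanSpace ℝ (Fin d)} {l l' : ℝ} (hl : 0 < l) (hll : l < l')
    (hx : ‖x - x'‖ < (l' - l) * r) :
    (fun z => x + l • z) '' K ⊆ (fun z => x' + l' • z) '' K := by
  rintro _ ⟨k, hk, rfl⟩
  have hdl : (0:ℝ) < l' - l := by linarith
  have hl' : (0:ℝ) < l' := by linarith
  have hwK : (l' - l)⁻¹ • (x - x') ∈ K := by
    apply hball
    rw [mem_ball_zero_iff, norm_smul, Real.norm_eq_abs, abs_of_pos (inv_pos.2 hdl)]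
    rw [inv_mul_lt_iff₀ hdl]
    exact hx
  refine ⟨(l/l') • k + ((l'-l)/l') • ((l' - l)⁻¹ • (x - x')), ?_, ?_⟩
  · exact hKconv hk hwK (by positivity) (by positivity) (by field_simp; ring)
  · show x' + l' • _ = x + l • k
    rw [smul_add, smul_smul, smul_smul, smul_smul]
    rw [show l' * (l / l') = l by field_simp,
      show l' * ((l'-l)/l') * (l'-l)⁻¹ = 1 by field_simp]
    module

end C2

section CMcore
open MeasureTheory Metric Filter Pointwise Topology
variable {d : ℕ} {K : Set (EuclideanSpace ℝ (Fin d))}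

lemma volS_facts (h0 : volume K ≠ 0) (ht : volume K ≠ ⊤) (x : EuclideanSpace ℝ (Fin d))
    {l : ℝ} (hl : 0 < l) :
    volume ((fun z => x + l • z) '' K) ≠ 0 ∧ volume ((fun z => x + l • z) '' K) ≠ ⊤ := by
  rw [vol_image x l K hl.le]
  constructor
  · simp only [ne_eq, mul_eq_zero, not_or]
    exact ⟨by simp [ENNReal.ofReal_eq_zero, not_le, pow_pos hl], h0⟩
  · exact ENNReal.mul_ne_top ENNReal.ofReal_ne_top ht

lemma measurableSet_S (hKcomp : IsCompact K) (x : EuclideanSpace ℝ (Fin d)) (l : ℝ) :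
    MeasurableSet ((fun z => x + l • z) '' K) :=
  (hKcomp.image (continuous_const.add (continuous_const_smul l))).measurableSet

lemma cm_nonneg (f : EuclideanSpace ℝ (Fin d) → ℝ) (x : EuclideanSpace ℝ (Fin d)) :
    0 ≤ centeredMax K f x :=
  Real.iSup_nonneg fun _ => avg_nonneg f

lemma cm_bddAbove (h0 : volume K ≠ 0) (ht : volume K ≠ ⊤)
    {f : EuclideanSpace ℝ (Fin d) → ℝ} (hb : ∀ y, |f y| ≤ 1) (x : EuclideanSpace ℝ (Fin d)) :
    BddAbove (Set.range fun l : {l : ℝ // 0 < l} =>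
      ⨍ y in (fun z => x + (l : ℝ) • z) '' K, |f y|) := by
  refine ⟨1, ?_⟩
  rintro _ ⟨l, rfl⟩
  exact avg_le_one (volS_facts h0 ht x l.2).1 (volS_facts h0 ht x l.2).2 hb

lemma cm_le_one (h0 : volume K ≠ 0) (ht : volume K ≠ ⊤)
    {f : EuclideanSpace ℝ (Fin d) → ℝ} (hb : ∀ y, |f y| ≤ 1) (x : EuclideanSpace ℝ (Fin d)) :
    centeredMax K f x ≤ 1 :=
  Real.iSup_le (fun l : {l : ℝ // 0 < l} =>
    avg_le_one (volS_facts h0 ht x l.2).1 (volS_facts h0 ht x l.2).2 hb) zero_le_one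

lemma avg_le_cm (h0 : volume K ≠ 0) (ht : volume K ≠ ⊤)
    {f : EuclideanSpace ℝ (Fin d) → ℝ} (hb : ∀ y, |f y| ≤ 1) (x : EuclideanSpace ℝ (Fin d))
    {l : ℝ} (hl : 0 < l) :
    ⨍ y in (fun z => x + l • z) '' K, |f y| ≤ centeredMax K f x :=
  le_ciSup (cm_bddAbove h0 ht hb x) (⟨l, hl⟩ : {l : ℝ // 0 < l})

lemma cm_mono (h0 : volume K ≠ 0) (ht : volume K ≠ ⊤)
    {f h : EuclideanSpace ℝ (Fin d) → ℝ} (hfh : ∀ y, |f y| ≤ |h y|)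
    (hmeas : AEStronglyMeasurable h (volume : Measure (EuclideanSpace ℝ (Fin d))))
    (hb : ∀ y, |h y| ≤ 1) (x : EuclideanSpace ℝ (Fin d)) :
    centeredMax K f x ≤ centeredMax K h x := by
  refine Real.iSup_le (fun l => ?_) (cm_nonneg h x)
  exact (avg_mono hfh (integrableOn_of_bdd (volS_facts h0 ht x l.2).2 hmeas hb)).trans
    (avg_le_cm h0 ht hb x l.2)

end CMcore
section LSC
open MeasureTheory Metric Filter Pointwise Topology
variable {d : ℕ} {K : Set (EuclideanSpace ℝ (Fin d))}

lemma cm_lsc (hKcomp : IsCompact K) (hKconv : Convex ℝ K)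
    (hKint : (interior K).Nonempty) (hKsymm : K = -K)
    {f : EuclideanSpace ℝ (Fin d) → ℝ}
    (hmeas : AEStronglyMeasurable f (volume : Measure (EuclideanSpace ℝ (Fin d))))
    (hb : ∀ y, |f y| ≤ 1) :
    LowerSemicontinuous (centeredMax K f) := by
  obtain ⟨r, hr, hball⟩ := exists_ball_subset hKconv hKint hKsymm
  have h0 : volume K ≠ 0 :=
    ((isOpen_interior.measure_pos volume hKint).trans_le
      (measure_mono interior_subset)).ne'
  have htop : volume K ≠ ⊤ := hKcomp.measure_lt_top.ne
  have hc : 0 < (volume K).toReal := ENNReal.toReal_pos h0 htop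
  intro x t ht'
  rcases lt_or_ge t 0 with htneg | htpos
  · exact Eventually.of_forall fun x' => htneg.trans_le (cm_nonneg f x')
  obtain ⟨l, hlA⟩ := exists_lt_of_lt_ciSup ht'
  have hcont : Tendsto (fun c : ℝ => ((l:ℝ)/c)^d *
      ⨍ y in (fun z => x + (l:ℝ) • z) '' K, |f y|) (𝓝[>] (l:ℝ))
      (𝓝 (⨍ y in (fun z => x + (l:ℝ) • z) '' K, |f y|)) := by
    have h1 : Tendsto (fun c : ℝ => ((l:ℝ)/c)^d *
        ⨍ y in (fun z => x + (l:ℝ) • z) '' K, |f y|) (𝓝 (l:ℝ))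
        (𝓝 (((l:ℝ)/(l:ℝ))^d * ⨍ y in (fun z => x + (l:ℝ) • z) '' K, |f y|)) :=
      (((tendsto_const_nhds.div tendsto_id l.2.ne')).pow d).mul_const _
    rw [div_self l.2.ne', one_pow, one_mul] at h1
    exact h1.mono_left nhdsWithin_le_nhds
  obtain ⟨l', hl't, hll'⟩ := (((hcont.eventually (eventually_gt_nhds hlA)).and
    self_mem_nhdsWithin)).exists
  -- hll already < 
  have hl' : (0:ℝ) < l' := l.2.trans hll'
  have hε : 0 < (l' - (l:ℝ)) * r := mul_pos (by linarith) hr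
  filter_upwards [ball_mem_nhds x hε] with x' hx'
  have hsub : (fun z => x + (l:ℝ) • z) '' K ⊆ (fun z => x' + l' • z) '' K := by
    refine subset_scaled hKconv hr hball l.2 hll' ?_
    rw [← dist_eq_norm, dist_comm]
    exact mem_ball.1 hx'
  have hIint : IntegrableOn (fun y => |f y|) ((fun z => x' + l' • z) '' K) volume :=
    (integrableOn_of_bdd (volS_facts h0 htop x' hl').2 hmeas hb).abs
  have hI : ∫ y in (fun z => x + (l:ℝ) • z) '' K, |f y| ≤
      ∫ y in (fun z => x' + l' • z) '' K, |f y| :=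
    setIntegral_mono_set hIint (Eventually.of_forall fun y => abs_nonneg _)
      (HasSubset.Subset.eventuallyLE hsub)
  have hvS : (volume ((fun z => x + (l:ℝ) • z) '' K)).toReal = (l:ℝ)^d * (volume K).toReal := by
    rw [vol_image x (l:ℝ) K l.2.le, ENNReal.toReal_mul, ENNReal.toReal_ofReal (pow_nonneg l.2.le d)]
  have hvS' : (volume ((fun z => x' + l' • z) '' K)).toReal = l'^d * (volume K).toReal := by
    rw [vol_image x' l' K hl'.le, ENNReal.toReal_mul, ENNReal.toReal_ofReal (pow_nonneg hl'.le d)]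
  have key : ((l:ℝ)/l')^d * ⨍ y in (fun z => x + (l:ℝ) • z) '' K, |f y| ≤
      ⨍ y in (fun z => x' + l' • z) '' K, |f y| := by
    rw [setAverage_eq, setAverage_eq, smul_eq_mul, smul_eq_mul, measureReal_def, measureReal_def, hvS, hvS']
    have heq : ((l:ℝ)/l')^d * (((l:ℝ)^d * (volume K).toReal)⁻¹ *
        ∫ y in (fun z => x + (l:ℝ) • z) '' K, |f y|) =
        (l'^d * (volume K).toReal)⁻¹ * ∫ y in (fun z => x + (l:ℝ) • z) '' K, |f y| := by
      have h1 : ((l:ℝ)) ≠ 0 := l.2.ne'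
      have h2 : l' ≠ 0 := hl'.ne'
      have h3 : (volume K).toReal ≠ 0 := hc.ne'
      field_simp
      rw [div_pow, mul_right_comm, div_mul_cancel₀ _ (pow_ne_zero d h2)]
    rw [heq]
    exact mul_le_mul_of_nonneg_left hI (by positivity)
  exact hl't.trans_le (key.trans (avg_le_cm h0 htop hb x' hl'))

lemma cm_measurable (hKcomp : IsCompact K) (hKconv : Convex ℝ K)
    (hKint : (interior K).Nonempty) (hKsymm : K = -K)
    {f : EuclideanSpace ℝ (Fin d) → ℝ}
    (hmeas : AEStronglyMeasurable f (volume : Measure (EuclideanSpace ℝ (Fin d))))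
    (hb : ∀ y, |f y| ≤ 1) :
    Measurable (centeredMax K f) :=
  (cm_lsc hKcomp hKconv hKint hKsymm hmeas hb).measurable
end LSC

end AuxCM

theorem limit_of_iterates_is_fixed_point
    (d : ℕ)
    (K : Set (EuclideanSpace ℝ (Fin d))) (hKcomp : IsCompact K) (hKconv : Convex ℝ K)
    (hKint : (interior K).Nonempty) (hKsymm : K = -K)
    (F : ℕ → EuclideanSpace ℝ (Fin d) → ℝ)
    (hF : F = fun n => (centeredMax K)^[n]
      (Set.indicator (ball (0 : EuclideanSpace ℝ (Fin d)) 1) fun _ => (1 : ℝ)))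
    (g : EuclideanSpace ℝ (Fin d) → ℝ)
    (hg : g = fun x => ⨆ n : ℕ, F n x) :
    (∀ x, Monotone fun n => F n x) ∧
    (∀ n x, F n x ≤ 1) ∧
    (∀ x, Tendsto (fun n => F n x) atTop (nhds (g x))) ∧
    (∀ x, centeredMax K g x = g x) := by
  obtain ⟨r, hr, hball⟩ := exists_ball_subset hKconv hKint hKsymm
  have h0 : volume K ≠ 0 :=
    ((isOpen_interior.measure_pos volume hKint).trans_le
      (measure_mono interior_subset)).ne'
  have htop : volume K ≠ ⊤ := hKcomp.measure_lt_top.ne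
  have hF0 : F 0 = Set.indicator (ball (0 : EuclideanSpace ℝ (Fin d)) 1) fun _ => (1:ℝ) := by
    rw [hF]
    rfl
  have hFsucc : ∀ n, F (n+1) = centeredMax K (F n) := by
    intro n; rw [hF]
    exact Function.iterate_succ_apply' _ n _
  -- basic properties by induction
  have hprops : ∀ n, Measurable (F n) ∧ (∀ x, 0 ≤ F n x) ∧ (∀ x, F n x ≤ 1) := by
    intro n
    induction n with
    | zero =>
      rw [hF0]
      refine ⟨measurable_const.indicator measurableSet_ball,
        fun x => Set.indicator_nonneg (fun _ _ => zero_le_one) x, fun x => ?_⟩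
      by_cases hx : x ∈ ball (0 : EuclideanSpace ℝ (Fin d)) 1
      · simp [Set.indicator_of_mem hx]
      · simp [Set.indicator_of_notMem hx]
    | succ n ih =>
      obtain ⟨hm, hnn, hle⟩ := ih
      have hb : ∀ y, |F n y| ≤ 1 := fun y => abs_le.2 ⟨by linarith [hnn y], hle y⟩
      rw [hFsucc n]
      exact ⟨cm_measurable hKcomp hKconv hKint hKsymm hm.aestronglyMeasurable hb,
        fun x => cm_nonneg _ x, fun x => cm_le_one h0 htop hb x⟩
  have habs : ∀ n y, |F n y| ≤ 1 := fun n y =>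
    abs_le.2 ⟨by linarith [(hprops n).2.1 y], (hprops n).2.2 y⟩
  -- monotonicity step
  have hstep : ∀ n x, F n x ≤ F (n+1) x := by
    intro n
    induction n with
    | zero =>
      intro x
      rw [hFsucc 0]
      by_cases hx : x ∈ ball (0 : EuclideanSpace ℝ (Fin d)) 1
      · obtain ⟨R, hR, hKR⟩ := hKcomp.isBounded.subset_ball_lt 0 0
        have hx1 : ‖x‖ < 1 := by simpa [mem_ball, dist_eq_norm] using hx
        set l : ℝ := (1 - ‖x‖) / (2 * R) with hl
        have hlpos : 0 < l := div_pos (by linarith) (by linarith)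
        have hsub : (fun z => x + l • z) '' K ⊆ ball (0 : EuclideanSpace ℝ (Fin d)) 1 := by
          rintro _ ⟨k, hk, rfl⟩
          have hkR : ‖k‖ < R := by simpa [mem_ball, dist_eq_norm] using hKR hk
          rw [mem_ball_zero_iff]
          calc ‖x + l • k‖ ≤ ‖x‖ + ‖l • k‖ := norm_add_le _ _
            _ = ‖x‖ + l * ‖k‖ := by rw [norm_smul, Real.norm_eq_abs, abs_of_pos hlpos]
            _ < ‖x‖ + l * R := by
                have : l * ‖k‖ < l * R := by
                  apply mul_lt_mul_of_pos_left hkR hlpos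
                linarith
            _ = ‖x‖ + (1 - ‖x‖) / 2 := by
                rw [hl]; field_simp
            _ < 1 := by linarith
        have havg : ⨍ y in (fun z => x + l • z) '' K, |F 0 y| = 1 := by
          apply avg_one (measurableSet_S hKcomp x l) (volS_facts h0 htop x hlpos).1
            (volS_facts h0 htop x hlpos).2
          intro y hy
          rw [hF0]
          exact Set.indicator_of_mem (hsub hy) _
        have h1 : F 0 x ≤ 1 := (hprops 0).2.2 x
        calc F 0 x ≤ 1 := h1
          _ = ⨍ y in (fun z => x + l • z) '' K, |F 0 y| := havg.symm
          _ ≤ centeredMax K (F 0) x := avg_le_cm h0 htop (habs 0) x hlpos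
      · have : F 0 x = 0 := by rw [hF0]; exact Set.indicator_of_notMem hx _
        rw [this]
        exact cm_nonneg _ x
    | succ n ih =>
      intro x
      calc F (n+1) x = centeredMax K (F n) x := congrFun (hFsucc n) x
        _ ≤ centeredMax K (F (n+1)) x := by
            refine cm_mono h0 htop (fun y => ?_) (hprops (n+1)).1.aestronglyMeasurable
              (habs (n+1)) x
            rw [abs_of_nonneg ((hprops n).2.1 y), abs_of_nonneg ((hprops (n+1)).2.1 y)]
            exact ih y
        _ = F (n+2) x := (congrFun (hFsucc (n+1)) x).symm
  have hMono : ∀ x, Monotone fun n => F n x :=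
    fun x => monotone_nat_of_le_succ fun n => hstep n x
  have hBdd : ∀ x, BddAbove (Set.range fun n => F n x) := by
    intro x
    exact ⟨1, by rintro _ ⟨n, rfl⟩; exact (hprops n).2.2 x⟩
  have hTend : ∀ x, Tendsto (fun n => F n x) atTop (nhds (g x)) := by
    intro x
    rw [hg]
    exact tendsto_atTop_ciSup (hMono x) (hBdd x)
  have hFg : ∀ n x, F n x ≤ g x := by
    intro n x
    rw [hg]
    exact le_ciSup (hBdd x) n
  have hgnn : ∀ x, 0 ≤ g x := fun x => ((hprops 0).2.1 x).trans (hFg 0 x)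
  have hgle : ∀ x, g x ≤ 1 := by
    intro x
    rw [hg]
    exact Real.iSup_le (fun n => (hprops n).2.2 x) zero_le_one
  have hgabs : ∀ y, |g y| ≤ 1 := fun y => abs_le.2 ⟨by linarith [hgnn y], hgle y⟩
  have hgmeas : Measurable g :=
    measurable_of_tendsto_metrizable' atTop (fun n => (hprops n).1)
      (tendsto_pi_nhds.2 hTend)
  refine ⟨hMono, fun n x => (hprops n).2.2 x, hTend, fun x => ?_⟩
  apply le_antisymm
  · -- centeredMax K g x ≤ g x
    refine Real.iSup_le (fun l => ?_) (hgnn x)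
    set S := (fun z => x + (l:ℝ) • z) '' K with hS
    have hSt := (volS_facts h0 htop x l.2).2
    have hS0 := (volS_facts h0 htop x l.2).1
    have hint : ∀ n, IntegrableOn (F n) S volume := fun n =>
      integrableOn_of_bdd hSt (hprops n).1.aestronglyMeasurable (habs n)
    have hintg : IntegrableOn g S volume :=
      integrableOn_of_bdd hSt hgmeas.aestronglyMeasurable hgabs
    have hmct : Tendsto (fun n => ∫ y in S, F n y) atTop (nhds (∫ y in S, g y)) :=
      integral_tendsto_of_tendsto_of_monotone hint hintg
        (Eventually.of_forall fun y => hMono y) (Eventually.of_forall fun y => hTend y)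
    have hbound : ∀ n, (volume S).toReal⁻¹ * ∫ y in S, F n y ≤ g x := by
      intro n
      have h1 : ⨍ y in S, |F n y| ≤ centeredMax K (F n) x := avg_le_cm h0 htop (habs n) x l.2
      have h2 : ∫ y in S, |F n y| = ∫ y in S, F n y :=
        integral_congr_ae (Eventually.of_forall fun y => abs_of_nonneg ((hprops n).2.1 y))
      rw [setAverage_eq, smul_eq_mul, h2] at h1
      calc (volume S).toReal⁻¹ * ∫ y in S, F n y ≤ centeredMax K (F n) x := h1
        _ = F (n+1) x := by rw [hFsucc n]
        _ ≤ g x := hFg (n+1) x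
    have hlim : Tendsto (fun n => (volume S).toReal⁻¹ * ∫ y in S, F n y) atTop
        (nhds ((volume S).toReal⁻¹ * ∫ y in S, g y)) := hmct.const_mul _
    have hfin : (volume S).toReal⁻¹ * ∫ y in S, g y ≤ g x :=
      le_of_tendsto hlim (Eventually.of_forall hbound)
    have h2 : ∫ y in S, |g y| = ∫ y in S, g y :=
      integral_congr_ae (Eventually.of_forall fun y => abs_of_nonneg (hgnn y))
    rw [setAverage_eq, smul_eq_mul, h2]
    exact hfin
  · -- g x ≤ centeredMax K g x
    rw [show g x = ⨆ n, F n x from by rw [hg]]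
    refine ciSup_le fun n => ?_
    calc F n x ≤ F (n+1) x := hstep n x
      _ = centeredMax K (F n) x := by rw [hFsucc n]
      _ ≤ centeredMax K g x := by
          refine cm_mono h0 htop (fun y => ?_) hgmeas.aestronglyMeasurable hgabs x
          rw [abs_of_nonneg ((hprops n).2.1 y), abs_of_nonneg (hgnn y)]
          exact hFg n y
end
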